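/- Let t ≥ 1 and let σ, h be permutations of {1,…,t} with h(t) = t (the uppermost horizontal strand in the B-square belongs to string t). Then N_B − N_A = −(t − 1). -/

import Mathlib

open Finset

/-- `epsBW σ h i j` is the sign ε_{ij} in the B-square: `a` is the element of
`{i,j}` whose vertical strand is further left (smaller `σ`), `b` is the element
whose horizontal strand is higher (larger `h`); ε = 1 if `a > b`, −1 if `a < b`,
0 if `a = b`.  (Strings are indexed 0,…,t−1 instead of 1,…,t.) -/
def epsBW {t : ℕ} (σ h : Equiv.Perm (Fin t)) (i j : Fin t) : ℤ :=
  let a : Fin t := if σ i < σ j then i else j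
  let b : Fin t := if h i < h j then j else i
  if b < a then 1 else if a < b then -1 else 0

/-- The A-square heights: `hA h` is the cyclic relabeling of `h`,
`(hA h) 0 = h (t-1)` and `(hA h) i = h (i-1)` for `i ≥ 1`
(0-indexed version of h′(1) = h(t), h′(i) = h(i−1)). -/
def hA {t : ℕ} (h : Equiv.Perm (Fin t)) : Fin t → Fin t :=
  fun i => h ((finRotate t).symm i)

/-- `deltaBW σ h i j` is the sign δ_{ij} in the A-square: `a'` is the element of
`{i,j}` whose vertical strand is further right (larger `σ`), `b'` is the element
whose A-square horizontal strand is lower (smaller `hA h`); δ = 1 if `b' > a'`,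
−1 if `b' < a'`, 0 if `b' = a'`. -/
def deltaBW {t : ℕ} (σ h : Equiv.Perm (Fin t)) (i j : Fin t) : ℤ :=
  let a' : Fin t := if σ i < σ j then j else i
  let b' : Fin t := if hA h i < hA h j then i else j
  if a' < b' then 1 else if b' < a' then -1 else 0

/-- `N_B = Σ_{i<j} ε_{ij}`. -/
def NB {t : ℕ} (σ h : Equiv.Perm (Fin t)) : ℤ :=
  ∑ p ∈ Finset.univ.filter (fun p : Fin t × Fin t => p.1 < p.2), epsBW σ h p.1 p.2

/-- `N_A = Σ_{i<j} δ_{ij}`. -/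
def NA {t : ℕ} (σ h : Equiv.Perm (Fin t)) : ℤ :=
  ∑ p ∈ Finset.univ.filter (fun p : Fin t × Fin t => p.1 < p.2), deltaBW σ h p.1 p.2

section Aux

open Finset

variable {n : ℕ}

private lemma rot_val_of_ne_last (a : Fin (n + 1)) (ha : a ≠ Fin.last n) :
    (finRotate (n + 1) a).val = a.val + 1 := by
  rw [finRotate_succ_apply, Fin.val_add_one]
  simp [ha]

private lemma hA_rot (h : Equiv.Perm (Fin (n + 1))) (x : Fin (n + 1)) :
    hA h (finRotate (n + 1) x) = h x := by
  simp only [hA, Equiv.symm_apply_apply]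

private lemma two_eps (σ h : Equiv.Perm (Fin (n + 1))) {i j : Fin (n + 1)} (hij : i < j) :
    2 * epsBW σ h i j =
      (if σ i < σ j then (-1 : ℤ) else 1) + (if h i < h j then (-1 : ℤ) else 1) := by
  simp only [epsBW, Fin.lt_def] at hij ⊢
  split_ifs <;> omega

private lemma two_delta (σ h : Equiv.Perm (Fin (n + 1))) {i j : Fin (n + 1)} (hij : i < j) :
    2 * deltaBW σ h i j =
      (if σ i < σ j then (-1 : ℤ) else 1) + (if hA h i < hA h j then (-1 : ℤ) else 1) := by
  simp only [deltaBW, Fin.lt_def] at hij ⊢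
  split_ifs <;> omega

private def rotPair (n : ℕ) (p : Fin (n + 1) × Fin (n + 1)) : Fin (n + 1) × Fin (n + 1) :=
  if p.2 = Fin.last n then (finRotate (n + 1) p.2, finRotate (n + 1) p.1)
  else (finRotate (n + 1) p.1, finRotate (n + 1) p.2)

private def unrotPair (n : ℕ) (q : Fin (n + 1) × Fin (n + 1)) : Fin (n + 1) × Fin (n + 1) :=
  if q.1 = 0 then ((finRotate (n + 1)).symm q.2, Fin.last n)
  else ((finRotate (n + 1)).symm q.1, (finRotate (n + 1)).symm q.2)

private lemma ne_last_of_lt {a b : Fin (n + 1)} (hab : a < b) : a ≠ Fin.last n := by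
  intro h
  exact absurd (h ▸ hab) (Fin.not_lt.2 (Fin.le_last b))

private lemma symm_ne_last {a : Fin (n + 1)} (ha : a ≠ 0) :
    (finRotate (n + 1)).symm a ≠ Fin.last n := by
  intro h
  apply ha
  have := congrArg (finRotate (n + 1)) h
  rw [Equiv.apply_symm_apply, finRotate_last] at this
  exact this

private lemma sum_T_rot (h : Equiv.Perm (Fin (n + 1))) (hh : h (Fin.last n) = Fin.last n) :
    ∑ p ∈ Finset.univ.filter (fun p : Fin (n + 1) × Fin (n + 1) => p.1 < p.2),
      (if hA h p.1 < hA h p.2 then (-1 : ℤ) else 1)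
    = (∑ p ∈ Finset.univ.filter (fun p : Fin (n + 1) × Fin (n + 1) => p.1 < p.2),
      (if h p.1 < h p.2 then (-1 : ℤ) else 1)) + 2 * n := by
  set S := Finset.univ.filter (fun p : Fin (n + 1) × Fin (n + 1) => p.1 < p.2) with hS
  have memS : ∀ p : Fin (n + 1) × Fin (n + 1), p ∈ S ↔ p.1 < p.2 := by
    intro p; simp [hS]
  -- main bijection step
  have key : ∑ p ∈ S,
      ((if h p.1 < h p.2 then (-1 : ℤ) else 1) + (if p.2 = Fin.last n then 2 else 0))
      = ∑ p ∈ S, (if hA h p.1 < hA h p.2 then (-1 : ℤ) else 1) := by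
    refine Finset.sum_nbij' (rotPair n) (unrotPair n) ?_ ?_ ?_ ?_ ?_
    · intro p hp
      rw [memS] at hp ⊢
      by_cases h2 : p.2 = Fin.last n
      · simp only [rotPair, if_pos h2]
        have h1 : p.1 ≠ Fin.last n := ne_last_of_lt hp
        have : finRotate (n + 1) p.2 = 0 := by rw [h2, finRotate_last]
        rw [this]
        have hne : finRotate (n + 1) p.1 ≠ 0 := by
          rw [← finRotate_last (n := n)]
          exact fun hc => h1 ((finRotate (n + 1)).injective hc)
        exact Fin.pos_of_ne_zero hne
      · simp only [rotPair, if_neg h2]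
        have h1 : p.1 ≠ Fin.last n := ne_last_of_lt hp
        rw [Fin.lt_def, rot_val_of_ne_last _ h1, rot_val_of_ne_last _ h2]
        exact Nat.succ_lt_succ hp
    · intro q hq
      rw [memS] at hq ⊢
      have hq2 : q.2 ≠ 0 := by
        intro hc
        exact absurd (hc ▸ hq) (Fin.not_lt.2 (Fin.zero_le q.1))
      by_cases h1 : q.1 = 0
      · simp only [unrotPair, if_pos h1]
        exact lt_of_le_of_ne (Fin.le_last _) (symm_ne_last hq2)
      · simp only [unrotPair, if_neg h1]
        have ha : (finRotate (n + 1)).symm q.1 ≠ Fin.last n := symm_ne_last h1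
        have hb : (finRotate (n + 1)).symm q.2 ≠ Fin.last n := symm_ne_last hq2
        rw [Fin.lt_def]
        have e1 : (finRotate (n + 1) ((finRotate (n + 1)).symm q.1)).val
            = ((finRotate (n + 1)).symm q.1).val + 1 := rot_val_of_ne_last _ ha
        have e2 : (finRotate (n + 1) ((finRotate (n + 1)).symm q.2)).val
            = ((finRotate (n + 1)).symm q.2).val + 1 := rot_val_of_ne_last _ hb
        rw [Equiv.apply_symm_apply] at e1 e2
        have := Fin.lt_def.1 hq
        omega
    · intro p hp
      rw [memS] at hp
      by_cases h2 : p.2 = Fin.last n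
      · have : finRotate (n + 1) p.2 = 0 := by rw [h2, finRotate_last]
        simp only [rotPair, if_pos h2, unrotPair, this, if_pos rfl,
          Equiv.symm_apply_apply]
        exact Prod.ext rfl h2.symm
      · have h1 : p.1 ≠ Fin.last n := ne_last_of_lt hp
        have hne : finRotate (n + 1) p.1 ≠ 0 := by
          rw [← finRotate_last (n := n)]
          exact fun hc => h1 ((finRotate (n + 1)).injective hc)
        simp only [rotPair, if_neg h2, unrotPair, if_neg hne, Equiv.symm_apply_apply]
    · intro q hq
      rw [memS] at hq
      have hq2 : q.2 ≠ 0 := by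
        intro hc
        exact absurd (hc ▸ hq) (Fin.not_lt.2 (Fin.zero_le q.1))
      by_cases h1 : q.1 = 0
      · simp only [unrotPair, if_pos h1, rotPair, if_pos rfl, finRotate_last,
          Equiv.apply_symm_apply]
        exact Prod.ext h1.symm rfl
      · have hb : (finRotate (n + 1)).symm q.2 ≠ Fin.last n := symm_ne_last hq2
        simp only [unrotPair, if_neg h1, rotPair, if_neg hb, Equiv.apply_symm_apply]
    · intro p hp
      rw [memS] at hp
      by_cases h2 : p.2 = Fin.last n
      · simp only [rotPair, if_pos h2, if_pos h2, hA_rot]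
        have hlt : h p.1 < h p.2 := by
          rw [h2, hh]
          refine lt_of_le_of_ne (Fin.le_last _) ?_
          intro hc
          have : p.1 = Fin.last n := by
            have := congrArg h.symm hc
            rw [Equiv.symm_apply_apply] at this
            rw [this]
            have := congrArg h.symm hh
            rw [Equiv.symm_apply_apply] at this
            exact this.symm
          exact ne_last_of_lt hp this
        rw [if_pos hlt]
        have hnlt : ¬ h p.2 < h p.1 := Fin.not_lt.2 (le_of_lt hlt)
        rw [if_neg hnlt]
        norm_num
      · simp only [rotPair, if_neg h2, if_neg h2, hA_rot]
        ring
  rw [← key, Finset.sum_add_distrib]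
  congr 1
  rw [← Finset.sum_filter]
  rw [Finset.sum_const]
  have hcard : (S.filter (fun p => p.2 = Fin.last n)).card = n := by
    have : (S.filter (fun p => p.2 = Fin.last n)).card
        = (Finset.univ.erase (Fin.last n) : Finset (Fin (n + 1))).card := by
      refine Finset.card_nbij' (fun p => p.1) (fun i => (i, Fin.last n)) ?_ ?_ ?_ ?_
      · intro p hp
        simp only [Finset.mem_coe, Finset.mem_filter] at hp
        have := (memS p).1 hp.1
        exact Finset.mem_erase.2 ⟨ne_last_of_lt (hp.2 ▸ this), Finset.mem_univ _⟩
      · intro i hi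
        have hi' := Finset.mem_erase.1 hi
        rw [Finset.mem_coe, Finset.mem_filter]
        exact ⟨(memS _).2 (lt_of_le_of_ne (Fin.le_last _) hi'.1), rfl⟩
      · intro p hp
        simp only [Finset.mem_coe, Finset.mem_filter] at hp
        exact Prod.ext rfl hp.2.symm
      · intro i hi
        rfl
    rw [this, Finset.card_erase_of_mem (Finset.mem_univ _)]
    simp
  rw [hcard]
  ring

end Aux

/-- If the uppermost horizontal strand in the B-square belongs to string `t`
(0-indexed: `h (t-1) = t-1`), then `N_B − N_A = −(t−1)`. -/
theorem NB_sub_NA_eq (t : ℕ) (ht : 1 ≤ t) (σ h : Equiv.Perm (Fin t))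
    (hh : h ⟨t - 1, by omega⟩ = ⟨t - 1, by omega⟩) :
    NB σ h - NA σ h = -((t : ℤ) - 1) := by
  obtain ⟨n, rfl⟩ : ∃ n, t = n + 1 := ⟨t - 1, by omega⟩
  have hlast : h (Fin.last n) = Fin.last n := by
    have e : (⟨n + 1 - 1, by omega⟩ : Fin (n + 1)) = Fin.last n := by
      ext; simp
    rw [← e]; exact hh
  set S := Finset.univ.filter (fun p : Fin (n + 1) × Fin (n + 1) => p.1 < p.2) with hS
  have hNB : 2 * NB σ h = (∑ p ∈ S, (if σ p.1 < σ p.2 then (-1 : ℤ) else 1))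
      + ∑ p ∈ S, (if h p.1 < h p.2 then (-1 : ℤ) else 1) := by
    rw [NB, Finset.mul_sum, ← Finset.sum_add_distrib]
    refine Finset.sum_congr rfl fun p hp => ?_
    have : p.1 < p.2 := (Finset.mem_filter.1 hp).2
    exact two_eps σ h this
  have hNA : 2 * NA σ h = (∑ p ∈ S, (if σ p.1 < σ p.2 then (-1 : ℤ) else 1))
      + ∑ p ∈ S, (if hA h p.1 < hA h p.2 then (-1 : ℤ) else 1) := by
    rw [NA, Finset.mul_sum, ← Finset.sum_add_distrib]
    refine Finset.sum_congr rfl fun p hp => ?_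
    have : p.1 < p.2 := (Finset.mem_filter.1 hp).2
    exact two_delta σ h this
  have hrot := sum_T_rot h hlast
  have : 2 * (NB σ h - NA σ h) = -(2 * n) := by
    rw [mul_sub, hNB, hNA, hrot]
    ring
  have hc : ((n : ℤ) + 1 : ℤ) = ((n + 1 : ℕ) : ℤ) := by push_cast; ring
  linarith
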